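/- arXiv:1512.04711 — 3 statements merged into one kernel-verified Lean document; each statement's English description precedes it below -/
import Mathlib

section
/- For all positive integers a, b with b ≥ 2, ⌊a/b⌋ = a/b + 1/(2b) − 1/2 + (1/(2b))·∑_{m=1}^{b-1} (1 − i·cot(πm/b))·exp(2πima/b). -/
open Finset Complex

-- (x-1) * Σ_{k<n} k x^k = (n-1) x^n + 1 - Σ_{k<n} x^k
lemma aux_sum_mul_pow (x : ℂ) (n : ℕ) :
    (x - 1) * ∑ k ∈ range n, (k : ℂ) * x ^ k
      = ((n : ℂ) - 1) * x ^ n + 1 - ∑ k ∈ range n, x ^ k := by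
  induction n with
  | zero => simp
  | succ n ih =>
    rw [Finset.sum_range_succ, Finset.sum_range_succ]
    push_cast
    linear_combination ih

-- if x^b = 1, x ≠ 1 then 1/(1-x) = -(1/b) Σ k x^k
lemma aux_inv_one_sub (x : ℂ) (b : ℕ) (hb : (b : ℂ) ≠ 0) (hx1 : x ≠ 1) (hxb : x ^ b = 1) :
    1 / (1 - x) = -(1 / b) * ∑ k ∈ range b, (k : ℂ) * x ^ k := by
  have h0 : x - 1 ≠ 0 := sub_ne_zero.mpr hx1
  have h1 : (1 : ℂ) - x ≠ 0 := sub_ne_zero.mpr (Ne.symm hx1)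
  have hgeom : ∑ k ∈ range b, x ^ k = 0 := by
    rw [geom_sum_eq hx1, hxb, sub_self, zero_div]
  have key := aux_sum_mul_pow x b
  rw [hgeom, hxb] at key
  field_simp
  linear_combination -key

lemma aux_cot (θ : ℝ) (hθsin : Real.sin θ ≠ 0)
    (hne : Complex.exp (θ * I) ^ 2 ≠ 1) :
    (1 : ℂ) - I * (Real.cot θ : ℂ) = 2 / (1 - (Complex.exp ((θ : ℂ) * I))⁻¹ ^ 2) := by
  set u := Complex.exp ((θ : ℂ) * I) with hu_def
  have hu : u ≠ 0 := Complex.exp_ne_zero _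
  have hs : Complex.sin θ ≠ 0 := by
    rw [← Complex.ofReal_sin]
    exact_mod_cast hθsin
  have hden : (1 : ℂ) - u⁻¹ ^ 2 ≠ 0 := by
    rw [inv_pow]
    rw [sub_ne_zero]
    intro h
    exact hne (by rw [← inv_inv (u ^ 2), ← h, inv_one])
  have hcos : Complex.cos θ = (u + u⁻¹) / 2 := by
    simp only [Complex.cos, neg_mul, Complex.exp_neg, hu_def]
  have hsin : Complex.sin θ = (u⁻¹ - u) * I / 2 := by
    simp only [Complex.sin, neg_mul, Complex.exp_neg, hu_def]
  rw [Complex.ofReal_cot, Complex.cot_eq_cos_div_sin, hcos, hsin]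
  rw [hsin] at hs
  have hu2 : (1:ℂ) - u ^ 2 ≠ 0 := sub_ne_zero.mpr (Ne.symm hne)
  have hIs : Complex.I - Complex.I * u ^ 2 ≠ 0 := by
    intro h
    apply hu2
    apply mul_left_cancel₀ Complex.I_ne_zero
    rw [mul_sub, mul_one, mul_zero]
    exact h
  have hu2' : (-1 : ℂ) + u ^ 2 ≠ 0 := by
    intro h; apply hu2; linear_combination -h
  have hB : u ^ 2 - 1 ≠ 0 := by intro h; apply hu2; linear_combination -h
  have hA : (1 - u * u) * Complex.I ≠ 0 := by
    apply mul_ne_zero _ Complex.I_ne_zero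
    intro h; apply hu2; linear_combination h - sq u
  field_simp [hIs, hu2', hA, hB]
  ring

lemma aux_main_sum (b r : ℕ) (hb : 2 ≤ b) (hr : r < b) :
    ∑ m ∈ Icc 1 (b - 1),
        (2 / (1 - (Complex.exp (2 * Real.pi * I / b))⁻¹ ^ m)) *
          (Complex.exp (2 * Real.pi * I / b)) ^ (m * r)
      = (b : ℂ) - 1 - 2 * r := by
  have hbne : (b : ℂ) ≠ 0 := Nat.cast_ne_zero.mpr (by omega)
  set z : ℂ := Complex.exp (2 * Real.pi * I / b) with hzdef
  have hz : IsPrimitiveRoot z b := Complex.isPrimitiveRoot_exp b (by omega)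
  have hz0 : z ≠ 0 := Complex.exp_ne_zero _
  have hzb : z ^ b = 1 := hz.pow_eq_one
  have hwb : ∀ k : ℕ, (z ^ r * (z ^ k)⁻¹) ^ b = 1 := by
    intro k
    have h1 : (z ^ r) ^ b = 1 := by rw [← pow_mul, mul_comm, pow_mul, hzb, one_pow]
    have h2 : (z ^ k) ^ b = 1 := by rw [← pow_mul, mul_comm, pow_mul, hzb, one_pow]
    rw [mul_pow, h1, inv_pow, h2, inv_one, one_mul]
  have hsplit : range b = insert 0 (Icc 1 (b - 1)) := by
    ext x; simp [Finset.mem_range, Finset.mem_Icc]; omega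
  have h0notin : (0 : ℕ) ∉ Icc 1 (b - 1) := by simp
  have hinner : ∀ k ∈ range b,
      ∑ m ∈ Icc 1 (b - 1), (z ^ r * (z ^ k)⁻¹) ^ m
        = (b : ℂ) * (if k = r then 1 else 0) - 1 := by
    intro k hk
    rw [Finset.mem_range] at hk
    by_cases hkr : k = r
    · subst hkr
      have h1 : z ^ k * (z ^ k)⁻¹ = 1 := mul_inv_cancel₀ (pow_ne_zero _ hz0)
      simp only [h1, one_pow, Finset.sum_const, nsmul_eq_mul, mul_one, if_pos rfl]
      rw [Nat.card_Icc]
      have : b - 1 + 1 - 1 = b - 1 := by omega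
      rw [this]
      push_cast [Nat.cast_sub (by omega : 1 ≤ b)]
      ring
    · have hw1 : z ^ r * (z ^ k)⁻¹ ≠ 1 := by
        rw [Ne, mul_inv_eq_one₀ (pow_ne_zero _ hz0)]
        intro h
        exact hkr (hz.pow_inj hk hr h.symm)
      have hgeo := geom_sum_eq hw1 b
      rw [hwb k, sub_self, zero_div] at hgeo
      rw [hsplit, Finset.sum_insert h0notin, pow_zero] at hgeo
      rw [if_neg hkr]
      linear_combination hgeo
  have hgauss : ∑ k ∈ range b, (k : ℂ) = (b : ℂ) * ((b : ℂ) - 1) / 2 := by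
    have h := Finset.sum_range_id_mul_two b
    have h2 := congrArg (Nat.cast : ℕ → ℂ) h
    push_cast [Nat.cast_sub (show 1 ≤ b by omega)] at h2
    linear_combination h2 / 2
  have step1 : ∀ m ∈ Icc 1 (b - 1),
      (2 / (1 - z⁻¹ ^ m)) * z ^ (m * r)
        = ∑ k ∈ range b, (-(2 / b) * (k : ℂ)) * (z ^ r * (z ^ k)⁻¹) ^ m := by
    intro m hm
    rw [Finset.mem_Icc] at hm
    have hx1 : z⁻¹ ^ m ≠ 1 := by
      rw [Ne, inv_pow, inv_eq_one]
      exact hz.pow_ne_one_of_pos_of_lt (by omega) (by omega)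
    have hxb : (z⁻¹ ^ m) ^ b = 1 := by
      rw [← pow_mul, inv_pow, mul_comm m b, pow_mul, hzb, one_pow, inv_one]
    have key := aux_inv_one_sub (z⁻¹ ^ m) b hbne hx1 hxb
    rw [div_eq_mul_one_div 2 (1 - z⁻¹ ^ m), key, Finset.mul_sum, Finset.mul_sum,
      Finset.sum_mul]
    apply Finset.sum_congr rfl
    intro k _
    have hpow : (z⁻¹ ^ m) ^ k * z ^ (m * r) = (z ^ r * (z ^ k)⁻¹) ^ m := by
      have e1 : (z⁻¹ ^ m) ^ k = (z ^ (m * k))⁻¹ := by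
        rw [inv_pow, inv_pow, ← pow_mul]
      have e2 : ((z ^ k)⁻¹) ^ m = (z ^ (m * k))⁻¹ := by
        rw [inv_pow, ← pow_mul, mul_comm]
      rw [e1, mul_pow, e2, ← pow_mul, mul_comm m r, mul_comm]
    calc 2 * (-(1 / ↑b) * ((k : ℂ) * (z⁻¹ ^ m) ^ k)) * z ^ (m * r)
        = (-(2 / b) * (k : ℂ)) * ((z⁻¹ ^ m) ^ k * z ^ (m * r)) := by ring
      _ = (-(2 / b) * (k : ℂ)) * (z ^ r * (z ^ k)⁻¹) ^ m := by rw [hpow]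
  rw [Finset.sum_congr rfl step1, Finset.sum_comm]
  have : ∀ k ∈ range b,
      ∑ m ∈ Icc 1 (b - 1), (-(2 / (b:ℂ)) * (k : ℂ)) * (z ^ r * (z ^ k)⁻¹) ^ m
        = -(2 / (b:ℂ)) * (k : ℂ) * ((b : ℂ) * (if k = r then 1 else 0) - 1) := by
    intro k hk
    rw [← Finset.mul_sum, hinner k hk]
  rw [Finset.sum_congr rfl this]
  have hsum : ∑ k ∈ range b, -(2 / (b:ℂ)) * (k : ℂ) * ((b : ℂ) * (if k = r then 1 else 0) - 1)
      = -(2 / (b:ℂ)) * ((b : ℂ) * (r : ℂ) - ∑ k ∈ range b, (k : ℂ)) := by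
    have hterm : ∀ k : ℕ, -(2 / (b:ℂ)) * (k : ℂ) * ((b : ℂ) * (if k = r then 1 else 0) - 1)
        = (if k = r then -(2 / (b:ℂ)) * ((b : ℂ) * (k : ℂ)) else 0) + (2 / (b:ℂ)) * (k : ℂ) := by
      intro k; by_cases h : k = r <;> simp [h] <;> ring
    simp only [hterm]
    rw [Finset.sum_add_distrib, Finset.sum_ite_eq' (range b) r,
      if_pos (Finset.mem_range.mpr hr), ← Finset.mul_sum, Finset.mul_sum, ← Finset.mul_sum]
    ring
  rw [hsum, hgauss]
  field_simp
  ring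

theorem stmt_4 (a b : ℕ) (ha : 1 ≤ a) (hb : 2 ≤ b) :
    ((a / b : ℕ) : ℂ) =
      (a : ℂ) / b + 1 / (2 * b) - 1 / 2 +
      (1 / (2 * (b : ℂ))) * ∑ m ∈ Finset.Icc 1 (b - 1),
        (1 - Complex.I * (Real.cot (Real.pi * m / b) : ℂ)) *
          Complex.exp (2 * Real.pi * Complex.I * m * a / b) := by
  have hbne : (b : ℂ) ≠ 0 := Nat.cast_ne_zero.mpr (by omega)
  set r := a % b with hrdef
  set q := a / b with hqdef
  have hr : r < b := Nat.mod_lt _ (by omega)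
  have haqr : b * q + r = a := Nat.div_add_mod a b
  set z : ℂ := Complex.exp (2 * Real.pi * I / b) with hzdef
  have hz : IsPrimitiveRoot z b := Complex.isPrimitiveRoot_exp b (by omega)
  have hzb : z ^ b = 1 := hz.pow_eq_one
  have hsummand : ∀ m ∈ Icc 1 (b - 1),
      (1 - Complex.I * (Real.cot (Real.pi * m / b) : ℂ)) *
          Complex.exp (2 * Real.pi * Complex.I * m * a / b)
        = (2 / (1 - z⁻¹ ^ m)) * z ^ (m * r) := by
    intro m hm
    rw [Finset.mem_Icc] at hm
    have hm0 : 0 < m := hm.1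
    have hmb : m < b := by omega
    have hb0R : (0:ℝ) < b := by positivity
    have hθpos : 0 < Real.pi * m / b := by
      apply div_pos (mul_pos Real.pi_pos (by exact_mod_cast hm0)) hb0R
    have hθlt : Real.pi * m / b < Real.pi := by
      rw [div_lt_iff₀ hb0R]
      have hmlt : (m : ℝ) < b := by exact_mod_cast hmb
      nlinarith [Real.pi_pos]
    have hsin : Real.sin (Real.pi * m / b) ≠ 0 :=
      ne_of_gt (Real.sin_pos_of_pos_of_lt_pi hθpos hθlt)
    have h1 : Complex.exp (((Real.pi * m / b : ℝ) : ℂ) * Complex.I) ^ 2 = z ^ m := by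
      rw [sq, ← Complex.exp_add, hzdef, ← Complex.exp_nat_mul]
      congr 1
      push_cast
      ring
    have hne : Complex.exp (((Real.pi * m / b : ℝ) : ℂ) * Complex.I) ^ 2 ≠ 1 := by
      rw [h1]; exact hz.pow_ne_one_of_pos_of_lt hm0.ne' hmb
    have h2 : (Complex.exp (((Real.pi * m / b : ℝ) : ℂ) * Complex.I))⁻¹ ^ 2 = z⁻¹ ^ m := by
      rw [inv_pow, h1, ← inv_pow]
    have hcot := aux_cot (Real.pi * m / b) hsin hne
    rw [h2] at hcot
    rw [hcot]
    congr 1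
    have e1 : Complex.exp (2 * Real.pi * Complex.I * m * a / b) = z ^ (m * a) := by
      rw [hzdef, ← Complex.exp_nat_mul]
      congr 1
      push_cast
      ring
    rw [e1]
    have hma : m * a = b * (m * q) + m * r := by rw [← haqr]; ring
    rw [hma, pow_add, pow_mul, hzb, one_pow, one_mul]
  rw [Finset.sum_congr rfl hsummand]
  have hS := aux_main_sum b r hb hr
  rw [← hzdef] at hS
  rw [hS]
  have ha' : (a : ℂ) = (b : ℂ) * q + r := by exact_mod_cast haqr.symm
  rw [ha']
  have hbb : (b:ℂ) * (b:ℂ)⁻¹ = 1 := mul_inv_cancel₀ hbne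
  linear_combination (-(q:ℂ) - 1/2) * hbb
end

section
/- For every real θ with 0 < θ < 2π, the series ∑_{a=1}^{∞} sin(aθ)/a converges to (π − θ)/2. -/
open Filter

theorem stmt_8 (θ : ℝ) (h0 : 0 < θ) (h2 : θ < 2 * Real.pi) :
    Filter.Tendsto (fun N : ℕ => ∑ a ∈ Finset.Icc 1 N, Real.sin (a * θ) / a)
      Filter.atTop (nhds ((Real.pi - θ) / 2)) := by
  have hpi := Real.pi_pos
  set e : ℂ := Complex.exp (θ * Complex.I) with he
  have hcos : Real.cos θ < 1 := by
    rcases lt_or_eq_of_le (Real.cos_le_one θ) with h | h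
    · exact h
    · exfalso
      rw [Real.cos_eq_one_iff_of_lt_of_lt (by linarith) h2] at h
      exact h0.ne' h
  have here : (1 - e).re = 1 - Real.cos θ := by
    simp [he, Complex.sub_re, Complex.exp_ofReal_mul_I_re]
  have hne : e ≠ 1 := by
    intro h
    have : (1 - e).re = 0 := by rw [h]; simp
    rw [here] at this; linarith
  -- partial sums (shifted by 1)
  set S : ℕ → ℂ := fun n => ∑ i ∈ Finset.range n, (1 / ((i : ℝ) + 1)) • e ^ (i + 1) with hS
  -- Dirichlet test: S is Cauchy
  have hb : ∀ n : ℕ, ‖∑ i ∈ Finset.range n, e ^ (i + 1)‖ ≤ 2 / ‖1 - e‖ := by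
    intro n
    have hsum : ∑ i ∈ Finset.range n, e ^ (i + 1) = e * ((e ^ n - 1) / (e - 1)) := by
      rw [← geom_sum_eq hne n, Finset.mul_sum]
      exact Finset.sum_congr rfl fun i _ => by ring
    have hee : ‖e‖ = 1 := by
      rw [he, Complex.norm_exp]
      simp
    rw [hsum, norm_mul, hee, one_mul, norm_div]
    have h1 : ‖e ^ n - 1‖ ≤ 2 := by
      calc ‖e ^ n - 1‖ ≤ ‖e ^ n‖ + ‖(1 : ℂ)‖ := norm_sub_le _ _
        _ = 2 := by rw [norm_pow, hee]; norm_num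
    have h2' : ‖e - 1‖ = ‖1 - e‖ := by rw [← norm_neg]; ring_nf
    rw [h2']
    have hpos : (0 : ℝ) < ‖1 - e‖ := by
      rw [norm_pos_iff]
      intro h
      have := congrArg Complex.re h
      rw [here] at this; simp at this; linarith
    gcongr
  have hanti : Antitone fun n : ℕ => 1 / ((n : ℝ) + 1) := by
    intro m n hmn
    apply one_div_le_one_div_of_le (by positivity)
    have : (m : ℝ) ≤ n := by exact_mod_cast hmn
    linarith
  have hzero : Tendsto (fun n : ℕ => 1 / ((n : ℝ) + 1)) atTop (nhds 0) :=
    tendsto_one_div_add_atTop_nhds_zero_nat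
  have hcauchy : CauchySeq S :=
    hanti.cauchySeq_series_mul_of_tendsto_zero_of_bounded hzero hb
  obtain ⟨L, hL⟩ := cauchySeq_tendsto_of_complete hcauchy
  -- Abel: partial sums of F where F n = e^n / n
  set F : ℕ → ℂ := fun n => e ^ n / n with hF
  have hFsum : Tendsto (fun n : ℕ => ∑ i ∈ Finset.range n, F i) atTop (nhds L) := by
    rw [← tendsto_add_atTop_iff_nat 1]
    have : ∀ n : ℕ, ∑ i ∈ Finset.range (n + 1), F i = S n := by
      intro n
      rw [Finset.sum_range_succ']
      simp only [hF, hS]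
      rw [Nat.cast_zero, div_zero, add_zero]
      refine Finset.sum_congr rfl fun i _ => ?_
      rw [Complex.real_smul]
      push_cast
      ring
    simpa only [this] using hL
  have habel := Complex.tendsto_tsum_powerSeries_nhdsWithin_lt hFsum
  rw [Filter.tendsto_map'_iff] at habel
  -- identify L
  have hslit : (1 - e) ∈ Complex.slitPlane := by
    left; rw [here]; linarith
  have hcont : Tendsto (fun x : ℝ => -Complex.log (1 - x * e)) (nhdsWithin 1 (Set.Iio 1))
      (nhds (-Complex.log (1 - e))) := by
    have h1 : Tendsto (fun x : ℝ => 1 - (x : ℂ) * e) (nhdsWithin 1 (Set.Iio 1))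
        (nhds (1 - e)) := by
      have : ContinuousAt (fun x : ℝ => 1 - (x : ℂ) * e) 1 := by fun_prop
      simpa using this.tendsto.mono_left nhdsWithin_le_nhds
    exact (h1.clog hslit).neg
  have heq : ∀ x : ℝ, x ∈ Set.Ioo (0 : ℝ) 1 →
      ((fun x : ℝ => ∑' n, F n * (x : ℂ) ^ n) x = (fun x : ℝ => -Complex.log (1 - x * e)) x) := by
    intro x hx
    have hxe : ‖(x : ℂ) * e‖ < 1 := by
      rw [norm_mul]
      have hee : ‖e‖ = 1 := by
        rw [he, Complex.norm_exp]; simp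
      rw [hee, mul_one, Complex.norm_real, Real.norm_eq_abs, abs_of_pos hx.1]
      exact hx.2
    have htt := (Complex.hasSum_taylorSeries_neg_log hxe).tsum_eq
    show ∑' n, F n * (x : ℂ) ^ n = -Complex.log (1 - x * e)
    rw [← htt]
    congr 1
    funext n
    simp only [hF]
    rw [mul_pow]
    ring
  have hLeq : L = -Complex.log (1 - e) := by
    refine tendsto_nhds_unique ?_ hcont
    refine habel.congr' ?_
    filter_upwards [Ioo_mem_nhdsLT_of_mem (Set.mem_Ioc.mpr ⟨zero_lt_one, le_refl 1⟩)] with x hx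
    exact heq x hx
  -- compute imaginary part
  have hsinpos : 0 < Real.sin (θ / 2) :=
    Real.sin_pos_of_pos_of_lt_pi (by linarith) (by linarith)
  have hpolar : 1 - e = (2 * Real.sin (θ / 2) : ℝ) *
      (Real.cos ((θ - Real.pi) / 2) + Real.sin ((θ - Real.pi) / 2) * Complex.I) := by
    apply Complex.ext
    · rw [here]
      simp only [Complex.add_re, Complex.mul_re, Complex.ofReal_re, Complex.ofReal_im,
        Complex.I_re, Complex.I_im, Complex.mul_im]
      have hc : Real.cos ((θ - Real.pi) / 2) = Real.sin (θ / 2) := by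
        rw [show (θ - Real.pi) / 2 = θ / 2 - Real.pi / 2 by ring, Real.cos_sub_pi_div_two]
      have hcosθ : Real.cos θ = 1 - 2 * Real.sin (θ / 2) ^ 2 := by
        have h2m := Real.cos_two_mul (θ / 2)
        rw [show 2 * (θ / 2) = θ by ring] at h2m
        nlinarith [Real.sin_sq_add_cos_sq (θ / 2)]
      rw [hc]
      simp
      nlinarith
    · have him : (1 - e).im = -Real.sin θ := by
        simp [he, Complex.sub_im, Complex.exp_ofReal_mul_I_im]
      rw [him]
      simp only [Complex.add_im, Complex.mul_im, Complex.ofReal_re, Complex.ofReal_im,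
        Complex.I_re, Complex.I_im, Complex.mul_re]
      have hs : Real.sin ((θ - Real.pi) / 2) = -Real.cos (θ / 2) := by
        rw [show (θ - Real.pi) / 2 = θ / 2 - Real.pi / 2 by ring, Real.sin_sub_pi_div_two]
      have hsinθ : Real.sin θ = 2 * Real.sin (θ / 2) * Real.cos (θ / 2) := by
        have h2m := Real.sin_two_mul (θ / 2)
        rw [show 2 * (θ / 2) = θ by ring] at h2m
        exact h2m
      rw [hs]
      simp only [Complex.ofReal_neg, Complex.neg_im, Complex.ofReal_im, Complex.ofReal_re]
      rw [hsinθ]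
      ring
  have harg : Complex.arg (1 - e) = (θ - Real.pi) / 2 := by
    rw [hpolar, Complex.ofReal_cos, Complex.ofReal_sin]
    exact Complex.arg_mul_cos_add_sin_mul_I (by positivity)
      (Set.mem_Ioc.mpr ⟨by linarith, by linarith⟩)
  have hLim : L.im = (Real.pi - θ) / 2 := by
    rw [hLeq, Complex.neg_im, Complex.log_im, harg]
    ring
  -- conclude
  have hfinal : Tendsto (fun n : ℕ => (S n).im) atTop (nhds ((Real.pi - θ) / 2)) := by
    rw [← hLim]
    exact (Complex.continuous_im.tendsto L).comp hL
  refine hfinal.congr fun N => ?_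
  rw [hS]
  rw [show Finset.Icc 1 N = Finset.Ico 1 (N + 1) by rw [Finset.Ico_add_one_right_eq_Icc]]
  rw [Finset.sum_Ico_eq_sum_range]
  simp only [Nat.add_sub_cancel]
  rw [Complex.im_sum]
  refine Finset.sum_congr rfl fun i _ => ?_
  rw [Complex.smul_im]
  have : e ^ (i + 1) = Complex.exp ((((i : ℝ) + 1) * θ : ℝ) * Complex.I) := by
    rw [he, ← Complex.exp_nat_mul]
    push_cast
    ring_nf
  rw [this, Complex.exp_ofReal_mul_I_im]
  push_cast
  field_simp
  ring_nf
  have hi : (1 + (i : ℝ)) ≠ 0 := by positivity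
  field_simp
  ring
end

section
/- There exist an absolute constant C₀ and a constant A > 0 such that for every integer b ≥ 2, |r(b) − C₀| ≤ A/b, where r(b) := ∑_{k≥1} k·( log(((k+1)b−1)/(kb−1)) − 1/k + 1/(2k²) − 1/(bk²) ). -/
noncomputable def r (b : ℕ) : ℝ :=
  ∑' k : ℕ, ((k : ℝ) + 1) *
    (Real.log ((((k : ℝ) + 2) * b - 1) / (((k : ℝ) + 1) * b - 1)) -
      1 / ((k : ℝ) + 1) + 1 / (2 * ((k : ℝ) + 1) ^ 2) -
      1 / (b * ((k : ℝ) + 1) ^ 2))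

namespace Stmt15Aux

open Real

/-- The limiting term. -/
noncomputable def c (k : ℕ) : ℝ :=
  ((k : ℝ) + 1) * (Real.log (((k : ℝ) + 2) / ((k : ℝ) + 1)) -
    1 / ((k : ℝ) + 1) + 1 / (2 * ((k : ℝ) + 1) ^ 2))

/-- The term of `r b`. -/
noncomputable def t (b k : ℕ) : ℝ :=
  ((k : ℝ) + 1) *
    (Real.log ((((k : ℝ) + 2) * b - 1) / (((k : ℝ) + 1) * b - 1)) -
      1 / ((k : ℝ) + 1) + 1 / (2 * ((k : ℝ) + 1) ^ 2) -
      1 / (b * ((k : ℝ) + 1) ^ 2))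

lemma log_one_add_le {u : ℝ} (hu : 0 ≤ u) : Real.log (1 + u) ≤ u := by
  have := Real.log_le_sub_one_of_pos (x := 1 + u) (by linarith)
  linarith

lemma le_log_one_add {u : ℝ} (hu : 0 ≤ u) : u - u ^ 2 ≤ Real.log (1 + u) := by
  have h1 : (0:ℝ) < 1 + u := by linarith
  have h := Real.one_sub_inv_le_log_of_pos h1
  have h2 : 1 - (1 + u)⁻¹ - (u - u ^ 2) = u ^ 3 / (1 + u) := by
    field_simp; ring
  have h3 : (0:ℝ) ≤ u ^ 3 / (1 + u) := by positivity
  linarith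

/-- cubic Taylor bound for log. -/
lemma log_cubic {K : ℝ} (hK : 2 ≤ K) :
    |Real.log ((K + 1) / K) - 1 / K + 1 / (2 * K ^ 2)| ≤ 2 / K ^ 3 := by
  have hK0 : (0:ℝ) < K := by linarith
  have hx : |(-(1 / K))| < 1 := by
    rw [abs_neg, abs_of_pos (by positivity)]
    rw [div_lt_one hK0]; linarith
  have h := Real.abs_log_sub_add_sum_range_le hx 2
  have hsum : (∑ i ∈ Finset.range 2, (-(1 / K)) ^ (i + 1) / (i + 1))
      = -(1 / K) + (1 / K) ^ 2 / 2 := by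
    simp [Finset.sum_range_succ]
    ring
  have harg : (1 : ℝ) - -(1 / K) = (K + 1) / K := by field_simp; ring
  rw [hsum, harg] at h
  have habs : |(-(1 / K))| = 1 / K := by
    rw [abs_neg, abs_of_pos (by positivity)]
  rw [habs] at h
  have heq : -(1 / K) + (1 / K) ^ 2 / 2 + Real.log ((K + 1) / K)
      = Real.log ((K + 1) / K) - 1 / K + 1 / (2 * K ^ 2) := by
    field_simp
    ring
  rw [heq] at h
  refine h.trans ?_
  have h1 : (1:ℝ) / 2 ≤ 1 - 1 / K := by
    have : 1 / K ≤ 1 / 2 := by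
      apply div_le_div_of_nonneg_left (by norm_num) (by norm_num) hK
    linarith
  have h2 : (1 / K) ^ 3 / (1 - 1 / K) ≤ (1 / K) ^ 3 / (1 / 2) := by
    apply div_le_div_of_nonneg_left (by positivity) (by norm_num) h1
  refine h2.trans (le_of_eq ?_)
  field_simp

lemma c_bound : ∀ k : ℕ, |c k| ≤ 2 * (1 / ((k : ℝ) + 1) ^ 2) := by
  intro k
  match k with
  | 0 =>
    have h2 : Real.log 2 ≤ 1 := by
      have := Real.log_le_sub_one_of_pos (x := 2) (by norm_num)
      linarith
    have h3 : 0 ≤ Real.log 2 := Real.log_nonneg (by norm_num)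
    simp only [c]
    norm_num
    rw [abs_le]
    constructor <;> linarith
  | Nat.succ n =>
    set K : ℝ := (n : ℝ) + 2 with hKdef
    have hK : 2 ≤ K := by
      have : (0:ℝ) ≤ (n : ℝ) := Nat.cast_nonneg n
      linarith
    have hK0 : (0:ℝ) < K := by linarith
    have hcast : ((Nat.succ n : ℕ) : ℝ) + 1 = K := by
      push_cast [hKdef]; ring
    have hcast2 : ((Nat.succ n : ℕ) : ℝ) + 2 = K + 1 := by
      push_cast [hKdef]; ring
    have hc : c (Nat.succ n)
        = K * (Real.log ((K + 1) / K) - 1 / K + 1 / (2 * K ^ 2)) := by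
      simp only [c, hcast, hcast2]
    rw [hc, abs_mul, abs_of_pos hK0]
    calc K * |Real.log ((K + 1) / K) - 1 / K + 1 / (2 * K ^ 2)|
        ≤ K * (2 / K ^ 3) := by
          exact mul_le_mul_of_nonneg_left (log_cubic hK) hK0.le
      _ = 2 * (1 / K ^ 2) := by field_simp
      _ = 2 * (1 / (((Nat.succ n : ℕ) : ℝ) + 1) ^ 2) := by rw [hcast]

/-- The key termwise estimate. -/
lemma key {B K : ℝ} (hB : 2 ≤ B) (hK : 1 ≤ K) :
    |K * (Real.log (((K + 1) * B - 1) / (K * B - 1)) - Real.log ((K + 1) / K)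
      - 1 / (B * K ^ 2))| ≤ 3 / B * (1 / K ^ 2) := by
  have hB0 : (0:ℝ) < B := by linarith
  have hK0 : (0:ℝ) < K := by linarith
  have hKB : (2:ℝ) ≤ K * B := by nlinarith
  have hKB1 : (0:ℝ) < K * B - 1 := by linarith
  have hKB2 : (0:ℝ) < (K + 1) * B - 1 := by nlinarith
  have hK1 : (0:ℝ) < K + 1 := by linarith
  set u : ℝ := 1 / ((K * B - 1) * (K + 1)) with hu_def
  have hu0 : 0 ≤ u := by positivity
  have hlog : Real.log (((K + 1) * B - 1) / (K * B - 1)) - Real.log ((K + 1) / K)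
      = Real.log (1 + u) := by
    rw [← Real.log_div (by positivity) (by positivity)]
    congr 1
    rw [hu_def]
    field_simp
    ring
  have hu_le : u ≤ 1 / (B * K ^ 2) := by
    rw [hu_def, div_le_div_iff₀ (by positivity) (by positivity)]
    nlinarith
  have upper : Real.log (1 + u) - 1 / (B * K ^ 2) ≤ 0 := by
    have := log_one_add_le hu0
    linarith
  have low1 : 1 / (B * K ^ 2) - u ≤ 2 / (B * K ^ 3) := by
    have e : 1 / (B * K ^ 2) - u
        = (K * B - K - 1) / ((B * K ^ 2) * ((K * B - 1) * (K + 1))) := by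
      rw [hu_def, div_sub_div _ _ (by positivity) (mul_pos hKB1 hK1).ne',
        div_eq_div_iff (mul_pos (by positivity) (mul_pos hKB1 hK1)).ne'
          (mul_pos (by positivity) (mul_pos hKB1 hK1)).ne']
      ring
    rw [e, div_le_div_iff₀ (by positivity) (by positivity)]
    nlinarith [mul_pos hB0 hK0, sq_nonneg K, sq_nonneg B, mul_pos hKB1 hK0]
  have low2 : u ^ 2 ≤ 1 / (2 * (B * K ^ 3)) := by
    have h' : u ^ 2 ≤ (1 / (B * K ^ 2)) ^ 2 := by
      exact pow_le_pow_left₀ hu0 hu_le 2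
    refine h'.trans ?_
    rw [div_pow, one_pow, div_le_div_iff₀ (by positivity) (by positivity)]
    nlinarith
  have lower : -(3 / (B * K ^ 3)) ≤ Real.log (1 + u) - 1 / (B * K ^ 2) := by
    have hl := le_log_one_add hu0
    have e1 : 1 / (2 * (B * K ^ 3)) ≤ 1 / (B * K ^ 3) := by
      apply one_div_le_one_div_of_le (by positivity)
      nlinarith
    have e2 : 2 / (B * K ^ 3) + 1 / (B * K ^ 3) = 3 / (B * K ^ 3) := by ring
    linarith
  have habs : |Real.log (1 + u) - 1 / (B * K ^ 2)| ≤ 3 / (B * K ^ 3) := by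
    rw [abs_le]
    refine ⟨lower, upper.trans (by positivity)⟩
  calc |K * (Real.log (((K + 1) * B - 1) / (K * B - 1)) - Real.log ((K + 1) / K)
      - 1 / (B * K ^ 2))|
      = K * |Real.log (1 + u) - 1 / (B * K ^ 2)| := by
        have e : Real.log (((K + 1) * B - 1) / (K * B - 1)) - Real.log ((K + 1) / K)
            - 1 / (B * K ^ 2) = Real.log (1 + u) - 1 / (B * K ^ 2) := by
          rw [← hlog]
        rw [e, abs_mul, abs_of_pos hK0]
    _ ≤ K * (3 / (B * K ^ 3)) := mul_le_mul_of_nonneg_left habs hK0.le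
    _ = 3 / B * (1 / K ^ 2) := by field_simp

lemma t_sub_c {b : ℕ} (hb : 2 ≤ b) (k : ℕ) :
    |t b k - c k| ≤ 3 / (b : ℝ) * (1 / ((k : ℝ) + 1) ^ 2) := by
  have hB : (2:ℝ) ≤ (b : ℝ) := by exact_mod_cast hb
  have hK : (1:ℝ) ≤ (k : ℝ) + 1 := by
    have : (0:ℝ) ≤ (k : ℝ) := Nat.cast_nonneg k
    linarith
  have hkey := key hB hK
  have e : t b k - c k
      = ((k : ℝ) + 1) * (Real.log (((((k : ℝ) + 1) + 1) * (b : ℝ) - 1)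
          / (((k : ℝ) + 1) * (b : ℝ) - 1))
        - Real.log ((((k : ℝ) + 1) + 1) / ((k : ℝ) + 1))
        - 1 / ((b : ℝ) * ((k : ℝ) + 1) ^ 2)) := by
    simp only [t, c]
    have h1 : (k : ℝ) + 1 + 1 = (k : ℝ) + 2 := by ring
    rw [h1]
    ring
  rw [e]
  exact hkey

lemma hS : Summable (fun k : ℕ => 1 / ((k : ℝ) + 1) ^ 2) := by
  have h := (Real.summable_one_div_nat_pow (p := 2)).mpr one_lt_two
  have h2 := (summable_nat_add_iff 1).mpr h
  refine h2.congr fun k => ?_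
  push_cast
  ring

lemma hc_sum : Summable c := by
  rw [← summable_abs_iff]
  exact Summable.of_nonneg_of_le (fun k => abs_nonneg _) c_bound (hS.mul_left 2)

end Stmt15Aux

theorem stmt_15 :
    ∃ (C₀ A : ℝ), 0 < A ∧ ∀ b : ℕ, 2 ≤ b → |r b - C₀| ≤ A / b := by
  classical
  open Stmt15Aux in
  refine ⟨∑' k, c k, 3 * ∑' k : ℕ, 1 / ((k : ℝ) + 1) ^ 2, ?_, ?_⟩
  · have hpos : 0 < ∑' k : ℕ, 1 / ((k : ℝ) + 1) ^ 2 :=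
      Summable.tsum_pos Stmt15Aux.hS (fun i => by positivity) 0 (by norm_num)
    linarith
  · intro b hb
    have hb0 : (0:ℝ) < (b : ℝ) := by
      have : (2:ℝ) ≤ (b : ℝ) := by exact_mod_cast hb
      linarith
    have habs_sum : Summable (fun k => |t b k - c k|) :=
      Summable.of_nonneg_of_le (fun k => abs_nonneg _) (t_sub_c hb)
        (hS.mul_left (3 / (b : ℝ)))
    have hd_sum : Summable (fun k => t b k - c k) := summable_abs_iff.mp habs_sum
    have ht_sum : Summable (t b) := by
      have := hd_sum.add hc_sum
      refine this.congr fun k => ?_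
      simp
    have hr : r b = ∑' k, t b k := rfl
    have hsub : r b - ∑' k, c k = ∑' k, (t b k - c k) := by
      rw [hr, Summable.tsum_sub ht_sum hc_sum]
    rw [hsub]
    calc |∑' k, (t b k - c k)| ≤ ∑' k, |t b k - c k| := by
          have := norm_tsum_le_tsum_norm (f := fun k => t b k - c k) (by
            simpa [Real.norm_eq_abs] using habs_sum)
          simpa [Real.norm_eq_abs] using this
      _ ≤ ∑' k : ℕ, 3 / (b : ℝ) * (1 / ((k : ℝ) + 1) ^ 2) :=
          Summable.tsum_le_tsum (t_sub_c hb) habs_sum (hS.mul_left (3 / (b : ℝ)))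
      _ = 3 / (b : ℝ) * ∑' k : ℕ, 1 / ((k : ℝ) + 1) ^ 2 := tsum_mul_left
      _ = 3 * (∑' k : ℕ, 1 / ((k : ℝ) + 1) ^ 2) / (b : ℝ) := by ring
end
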